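/- Fix c_0 > 0. For every δ > 0 there exists N such that for all n ≥ N, for every probability distribution H on ℝ with H([0, ∞)) = 1, for X_1, …, X_n i.i.d. with cdf F(t) = ∫ Φ(t − μ) dH(μ), and for every constant c: P(Y_n ≥ c) ≤ P(W_n^{++}(c_0) ≥ c) + 2(1 + δ) n^{−c_0}. -/

import Mathlib

open MeasureTheory ProbabilityTheory Filter
open scoped Classical

noncomputable section

/-- The standard normal density. -/
def stdPdf (x : ℝ) : ℝ := (Real.sqrt (2 * Real.pi))⁻¹ * Real.exp (-(x ^ 2) / 2)

/-- The standard normal cumulative distribution function. -/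
def Phi (t : ℝ) : ℝ := ∫ x in Set.Iic t, stdPdf x

/-- `D(μ; τ, τ')`. -/
def Dfun (μ τ τ' : ℝ) : ℝ := (Phi τ - Phi (τ - μ)) / (Phi τ' - Phi (τ' - μ))

/-- Empirical cdf of a sample of size `n`. -/
def empCdf (n : ℕ) (X : Fin n → ℝ) (t : ℝ) : ℝ :=
  (n : ℝ)⁻¹ * ∑ i, if X i ≤ t then (1 : ℝ) else 0

/-- Upper envelope `F⁺ₐ`. -/
def envP (n : ℕ) (a : ℝ) (G : ℝ → ℝ) (t : ℝ) : ℝ :=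
  (2 * G t + a ^ 2 / n + (a / Real.sqrt n) * Real.sqrt (a ^ 2 / n + 4 * G t - 4 * (G t) ^ 2)) /
    (2 * (1 + a ^ 2 / n))

/-- Lower envelope `F⁻ₐ`. -/
def envM (n : ℕ) (a : ℝ) (G : ℝ → ℝ) (t : ℝ) : ℝ :=
  (2 * G t + a ^ 2 / n - (a / Real.sqrt n) * Real.sqrt (a ^ 2 / n + 4 * G t - 4 * (G t) ^ 2)) /
    (2 * (1 + a ^ 2 / n))

/-- Grid points `t_j = (j - 1)/√(2 log n)`. -/
def gridPt (n : ℕ) (j : ℕ) : ℝ := ((j : ℝ) - 1) / Real.sqrt (2 * Real.log n)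

/-- Right-hand side ratio used in the defining equation for `μ̂⁽ʲ⁾`. -/
def ratioJ (n : ℕ) (a : ℝ) (X : Fin n → ℝ) (j : ℕ) : ℝ :=
  (Phi (gridPt n j) - envP n a (empCdf n X) (gridPt n j)) /
    (Phi (gridPt n (j + 1)) - envM n a (empCdf n X) (gridPt n (j + 1)))

/-- `μ̂⁽ʲ⁾`: the solution of `D(μ; t_j, t_{j+1}) = ratio`, when it exists (else 0). -/
def muHatJ (n : ℕ) (a : ℝ) (X : Fin n → ℝ) (j : ℕ) : ℝ :=
  if h : ∃ μ > 0, Dfun μ (gridPt n j) (gridPt n (j + 1)) = ratioJ n a X j then h.choose else 0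

/-- `ε̂⁽ʲ⁾ₐ`. -/
def epsHatJ (n : ℕ) (a : ℝ) (X : Fin n → ℝ) (j : ℕ) : ℝ :=
  if ∃ μ > 0, Dfun μ (gridPt n j) (gridPt n (j + 1)) = ratioJ n a X j then
    (Phi (gridPt n j) - envP n a (empCdf n X) (gridPt n j)) /
      (Phi (gridPt n j) - Phi (gridPt n j - muHatJ n a X j))
  else 0

/-- The grid estimator `ε̂*ₐ = max_j ε̂⁽ʲ⁾ₐ`. -/
def epsHatStar (n : ℕ) (a : ℝ) (X : Fin n → ℝ) : ℝ :=
  sSup ((fun j => epsHatJ n a X j) '' (Set.Icc 1 (Nat.ceil (2 * Real.log n))))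

/-- The statistic `W_n⁺`, as a function of a uniform sample. -/
def WnPlus (n : ℕ) (U : Fin n → ℝ) : ℝ :=
  sSup ((fun t => Real.sqrt n * |empCdf n U t - t| / Real.sqrt (t * (1 - t))) ''
    (Set.Icc (1 / 2) (Phi (Real.sqrt (2 * Real.log n)))))

/-- The statistic `Y_n`, as a function of the sample, for underlying cdf `F`. -/
def Yn (n : ℕ) (F : ℝ → ℝ) (X : Fin n → ℝ) : ℝ :=
  sSup ((fun t => Real.sqrt n * |empCdf n X t - F t| / Real.sqrt (F t * (1 - F t))) ''
    (Set.Icc 0 (Real.sqrt (2 * Real.log n))))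

/-- The statistic `W_n⁺⁺(c₀)`, as a function of the sample, for underlying cdf `F`. -/
def WnPP (c0 : ℝ) (n : ℕ) (F : ℝ → ℝ) (X : Fin n → ℝ) : ℝ :=
  sSup ((fun x => Real.sqrt n * |empCdf n X x - F x| / Real.sqrt (F x * (1 - F x))) ''
    {x : ℝ | empCdf n X 0 - Real.sqrt (c0 * Real.log n / n) ≤ F x ∧
      F x ≤ Phi (Real.sqrt (2 * Real.log n))})

/-- cdf of the two-point Gaussian mixture `(1-ε)N(0,1) + εN(μ,1)`. -/
def twoPointCdf (ε μ : ℝ) (t : ℝ) : ℝ := (1 - ε) * Phi t + ε * Phi (t - μ)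

/-- cdf of the one-sided Gaussian mixture `(1-ε)N(0,1) + ε ∫ N(μ,1) dH(μ)`. -/
def oneSidedCdf (ε : ℝ) (H : Measure ℝ) (t : ℝ) : ℝ :=
  (1 - ε) * Phi t + ε * ∫ m, Phi (t - m) ∂H

/-- cdf of the Uniform(0,1) distribution. -/
def unifCdf (t : ℝ) : ℝ := max 0 (min t 1)

/-- `X₁, …, Xₙ` are i.i.d. with cdf `F` under `P`. -/
def IIDWithCdf {Ω : Type} [MeasurableSpace Ω] (P : Measure Ω) {n : ℕ}
    (X : Fin n → Ω → ℝ) (F : ℝ → ℝ) : Prop :=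
  (∀ i, Measurable (X i)) ∧ iIndepFun X P ∧
    ∀ i t, P {ω | X i ω ≤ t} = ENNReal.ofReal (F t)

/-- The event that `F` lies inside the envelope on `[0, √(2 log n)]`. -/
def EnvEvent (n : ℕ) (a : ℝ) (F : ℝ → ℝ) (X : Fin n → ℝ) : Prop :=
  ∀ t ∈ Set.Icc (0 : ℝ) (Real.sqrt (2 * Real.log n)),
    envM n a (empCdf n X) t ≤ F t ∧ F t ≤ envP n a (empCdf n X) t

/-- The detection boundary `ρ*(β)`. -/
def rhoStar (β : ℝ) : ℝ :=
  if β ≤ 3 / 4 then β - 1 / 2 else (1 - Real.sqrt (1 - β)) ^ 2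



-- ===== auxiliary lemmas =====

lemma stdPdf_pos (x : ℝ) : 0 < stdPdf x := by
  unfold stdPdf; positivity

lemma integrable_stdPdf : Integrable stdPdf := by
  have h : Integrable fun x : ℝ => Real.exp (-(1/2) * x ^ 2) :=
    integrable_exp_neg_mul_sq (by norm_num)
  have he : stdPdf = fun x => (Real.sqrt (2 * Real.pi))⁻¹ * Real.exp (-(1/2) * x ^ 2) := by
    funext x; unfold stdPdf; ring_nf
  rw [he]
  exact h.const_mul _

lemma integral_stdPdf : ∫ x, stdPdf x = 1 := by
  have h : (∫ x : ℝ, Real.exp (-(1/2) * x ^ 2)) = Real.sqrt (Real.pi / (1/2)) :=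
    integral_gaussian (1/2)
  have h2 : stdPdf = fun x => (Real.sqrt (2 * Real.pi))⁻¹ * Real.exp (-(1/2) * x ^ 2) := by
    funext x; unfold stdPdf; ring_nf
  rw [h2, integral_const_mul, h]
  rw [show Real.pi / (1/2) = 2 * Real.pi by ring]
  rw [inv_mul_cancel₀]
  positivity

lemma Phi_mono : Monotone Phi := by
  intro a b hab
  exact setIntegral_mono_set integrable_stdPdf.integrableOn
    (Filter.Eventually.of_forall fun x => (stdPdf_pos x).le)
    (HasSubset.Subset.eventuallyLE (Set.Iic_subset_Iic.2 hab))

lemma Phi_nonneg (t : ℝ) : 0 ≤ Phi t :=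
  setIntegral_nonneg measurableSet_Iic fun x _ => (stdPdf_pos x).le

lemma Phi_measurable : Measurable Phi := Phi_mono.measurable

lemma Phi_add_compl (t : ℝ) : Phi t + ∫ x in Set.Ioi t, stdPdf x = 1 := by
  rw [Phi, ← integral_stdPdf]
  rw [← setIntegral_union (Set.Iic_disjoint_Ioi le_rfl) measurableSet_Ioi
    integrable_stdPdf.integrableOn integrable_stdPdf.integrableOn]
  rw [Set.Iic_union_Ioi, setIntegral_univ]

lemma integral_Ioi_stdPdf_pos (t : ℝ) : 0 < ∫ x in Set.Ioi t, stdPdf x := by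
  rw [setIntegral_pos_iff_support_of_nonneg_ae
    (Filter.Eventually.of_forall fun x => (stdPdf_pos x).le) integrable_stdPdf.integrableOn]
  have hs : Function.support stdPdf = Set.univ := by
    ext x; simp [Function.support, (stdPdf_pos x).ne']
  rw [hs]
  simp [Set.inter_univ]

lemma Phi_lt_one (t : ℝ) : Phi t < 1 := by
  have h1 := Phi_add_compl t
  have h2 := integral_Ioi_stdPdf_pos t
  linarith

lemma Phi_pos (t : ℝ) : 0 < Phi t := by
  rw [Phi]
  rw [setIntegral_pos_iff_support_of_nonneg_ae
    (Filter.Eventually.of_forall fun x => (stdPdf_pos x).le) integrable_stdPdf.integrableOn]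
  have hs : Function.support stdPdf = Set.univ := by
    ext x; simp [Function.support, (stdPdf_pos x).ne']
  rw [hs]
  simp [Set.inter_univ]

section Fcdf

variable (H : Measure ℝ) [IsProbabilityMeasure H]

lemma F_integrand_meas (t : ℝ) : Measurable (fun m : ℝ => Phi (t - m)) :=
  Phi_measurable.comp (measurable_const.sub measurable_id)

lemma F_integrable (t : ℝ) : Integrable (fun m : ℝ => Phi (t - m)) H := by
  refine (integrable_const (1:ℝ)).mono' (F_integrand_meas t).aestronglyMeasurable ?_
  refine Filter.Eventually.of_forall fun m => ?_
  rw [Real.norm_eq_abs, abs_of_nonneg (Phi_nonneg _)]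
  exact (Phi_lt_one _).le

lemma F_mono : Monotone (fun t => ∫ m, Phi (t - m) ∂H) := by
  intro a b hab
  exact integral_mono (F_integrable H a) (F_integrable H b)
    (fun m => Phi_mono (by linarith))

lemma F_nonneg (t : ℝ) : 0 ≤ ∫ m, Phi (t - m) ∂H :=
  integral_nonneg fun m => Phi_nonneg _

lemma F_pos (t : ℝ) : 0 < ∫ m, Phi (t - m) ∂H := by
  rw [integral_pos_iff_support_of_nonneg_ae
    (Filter.Eventually.of_forall fun m => (Phi_pos _).le) (F_integrable H t)]
  have hs : Function.support (fun m : ℝ => Phi (t - m)) = Set.univ := by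
    ext m; simp [Function.support, (Phi_pos (t - m)).ne']
  rw [hs]
  simp

lemma F_le_one (t : ℝ) : (∫ m, Phi (t - m) ∂H) ≤ 1 := by
  calc (∫ m, Phi (t - m) ∂H) ≤ ∫ _, (1:ℝ) ∂H :=
        integral_mono (F_integrable H t) (integrable_const 1) (fun m => (Phi_lt_one _).le)
    _ = 1 := by simp

lemma F_le_Phi (hH : H (Set.Ici 0) = 1) (t : ℝ) : (∫ m, Phi (t - m) ∂H) ≤ Phi t := by
  have hae : ∀ᵐ m ∂H, (0:ℝ) ≤ m := by
    rw [ae_iff]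
    have hs : {m : ℝ | ¬ (0:ℝ) ≤ m} = (Set.Ici (0:ℝ))ᶜ := by ext m; simp
    rw [hs, measure_compl measurableSet_Ici (by simp)]
    simp [hH]
  calc (∫ m, Phi (t - m) ∂H) ≤ ∫ _, Phi t ∂H := by
        refine integral_mono_ae (F_integrable H t) (integrable_const _) ?_
        filter_upwards [hae] with m hm
        exact Phi_mono (by linarith)
    _ = Phi t := by simp

end Fcdf

lemma exp_quad {x : ℝ} (hx : |x| ≤ 1) : Real.exp x ≤ 1 + x + (3/4) * x^2 := by
  have h := Real.exp_bound hx (n := 2) (by norm_num)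
  have h2 : (∑ i ∈ Finset.range 2, x ^ i / (Nat.factorial i : ℝ)) = 1 + x := by
    simp [Finset.sum_range_succ, Nat.factorial]
  rw [h2] at h
  norm_num [Nat.factorial, sq_abs] at h
  have h3 := abs_le.1 h
  linarith [h3.2]

lemma bern_mgf_bound {p t : ℝ} (hp0 : 0 ≤ p) (hp1 : p ≤ 1) (ht0 : 0 ≤ t) (ht1 : t ≤ 1) :
    Real.exp (-(t*p)) * (p * Real.exp t + (1 - p)) ≤ Real.exp ((3/16) * t^2) := by
  have key : Real.exp (-(t*p)) * (p * Real.exp t + (1 - p))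
      = p * Real.exp (t * (1 - p)) + (1 - p) * Real.exp (-(t * p)) := by
    rw [show t * (1 - p) = t + -(t*p) by ring, Real.exp_add]
    ring
  rw [key]
  have h1 : Real.exp (t * (1-p)) ≤ 1 + t*(1-p) + (3/4) * (t*(1-p))^2 := by
    apply exp_quad
    rw [abs_of_nonneg (by nlinarith)]
    nlinarith
  have h2 : Real.exp (-(t*p)) ≤ 1 + (-(t*p)) + (3/4) * (t*p)^2 := by
    have h := exp_quad (x := -(t*p)) (by rw [abs_neg, abs_of_nonneg (by nlinarith)]; nlinarith)
    calc Real.exp (-(t*p)) ≤ 1 + (-(t*p)) + (3/4)*(-(t*p))^2 := h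
      _ = 1 + (-(t*p)) + (3/4)*(t*p)^2 := by ring
  have hstep : p * Real.exp (t * (1-p)) + (1 - p) * Real.exp (-(t * p))
      ≤ 1 + (3/4) * t^2 * (p * (1-p)) := by
    have e1 : p * Real.exp (t*(1-p)) ≤ p * (1 + t*(1-p) + (3/4)*(t*(1-p))^2) :=
      mul_le_mul_of_nonneg_left h1 hp0
    have e2 : (1-p) * Real.exp (-(t*p)) ≤ (1-p) * (1 + (-(t*p)) + (3/4)*(t*p)^2) :=
      mul_le_mul_of_nonneg_left h2 (by linarith)
    nlinarith [sq_nonneg (t*p), sq_nonneg (t*(1-p))]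
  calc p * Real.exp (t * (1-p)) + (1 - p) * Real.exp (-(t * p))
      ≤ 1 + (3/4) * t^2 * (p * (1-p)) := hstep
    _ ≤ 1 + (3/16) * t^2 := by nlinarith [sq_nonneg (t*(1 - 2*p)), sq_nonneg t]
    _ ≤ Real.exp ((3/16) * t^2) := by linarith [Real.add_one_le_exp ((3/16) * t^2)]

lemma conc_bound {Ω : Type} [MeasurableSpace Ω] (P : Measure Ω) [IsProbabilityMeasure P]
    {n : ℕ} (X : Fin n → Ω → ℝ) (hmeas : ∀ i, Measurable (X i))
    (hind : iIndepFun X P)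
    (p : ℝ) (hp0 : 0 ≤ p) (hp1 : p ≤ 1)
    (hP : ∀ i, P {ω | X i ω ≤ 0} = ENNReal.ofReal p)
    (ε : ℝ) (hε0 : 0 ≤ ε) (hε1 : ε ≤ 1/2) :
    P {ω | (n:ℝ) * (p + ε) ≤ ∑ i, (if X i ω ≤ 0 then (1:ℝ) else 0)} ≤
      ENNReal.ofReal (Real.exp (-(5/4) * n * ε^2)) := by
  classical
  set t : ℝ := 2 * ε with ht_def
  have ht0 : 0 ≤ t := by positivity
  have ht1 : t ≤ 1 := by rw [ht_def]; linarith
  set Z : Fin n → Ω → ℝ := fun i ω => if X i ω ≤ 0 then (1:ℝ) else 0 with hZ_def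
  have hZmeas : ∀ i, Measurable (Z i) := by
    intro i
    exact Measurable.ite ((hmeas i) measurableSet_Iic) measurable_const measurable_const
  have hZind : iIndepFun Z P := by
    have h := hind.comp (g := fun _ => (fun x : ℝ => if x ≤ 0 then (1:ℝ) else 0))
      (fun _ => Measurable.ite measurableSet_Iic measurable_const measurable_const)
    exact h
  set S : Ω → ℝ := ∑ i, Z i with hS_def
  have hSapp : ∀ ω, S ω = ∑ i, (if X i ω ≤ 0 then (1:ℝ) else 0) := by
    intro ω; rw [hS_def]; simp [hZ_def]
  have hSmeas : Measurable S := by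
    have h : S = fun ω => ∑ i, Z i ω := by funext ω; simp [hS_def]
    rw [h]
    exact Finset.measurable_sum _ fun i _ => hZmeas i
  have hSbdd : ∀ ω, S ω ≤ n := by
    intro ω
    rw [hSapp]
    calc (∑ i : Fin n, (if X i ω ≤ 0 then (1:ℝ) else 0)) ≤ ∑ i : Fin n, (1:ℝ) :=
          Finset.sum_le_sum fun i _ => by split <;> norm_num
      _ = n := by simp
  have hint : Integrable (fun ω => Real.exp (t * S ω)) P := by
    refine (integrable_const (Real.exp (t * n))).mono'
      ((hSmeas.const_mul t).exp.aestronglyMeasurable) ?_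
    refine Filter.Eventually.of_forall fun ω => ?_
    rw [Real.norm_eq_abs, abs_of_pos (Real.exp_pos _), Real.exp_le_exp]
    exact mul_le_mul_of_nonneg_left (hSbdd ω) ht0
  have hch := measure_ge_le_exp_mul_mgf (μ := P) (X := S) ((n:ℝ) * (p + ε)) ht0 hint
  have hmgfZ : ∀ i, mgf (Z i) P t = p * Real.exp t + (1 - p) := by
    intro i
    have hAi : MeasurableSet {ω | X i ω ≤ 0} := (hmeas i) measurableSet_Iic
    have hfun : (fun ω => Real.exp (t * Z i ω)) =
        fun ω => Set.indicator {ω | X i ω ≤ 0} (fun _ => Real.exp t - 1) ω + 1 := by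
      funext ω
      rw [hZ_def]
      by_cases h : X i ω ≤ 0
      · simp [h, Set.indicator_of_mem (show ω ∈ {ω | X i ω ≤ 0} from h)]
      · simp [h, Set.indicator_of_notMem (show ω ∉ {ω | X i ω ≤ 0} from h)]
    rw [mgf, hfun]
    rw [integral_add ((integrable_indicator_iff hAi).2
      (integrableOn_const (measure_ne_top _ _))) (integrable_const 1)]
    rw [integral_indicator_const _ hAi]
    simp only [integral_const, measure_univ, probReal_univ, ENNReal.toReal_one, smul_eq_mul, one_mul]
    rw [measureReal_def, hP i, ENNReal.toReal_ofReal hp0]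
    ring
  have hmgfS : mgf S P t = (p * Real.exp t + (1 - p))^n := by
    rw [hS_def, show (∑ i, Z i) = ∑ i ∈ Finset.univ, Z i from rfl,
      hZind.mgf_sum hZmeas Finset.univ]
    rw [Finset.prod_congr rfl (fun i _ => hmgfZ i), Finset.prod_const, Finset.card_univ,
      Fintype.card_fin]
  rw [hmgfS] at hch
  have hfac : Real.exp (-t * ((n:ℝ) * (p + ε))) * (p * Real.exp t + (1 - p))^n ≤
      Real.exp (-(5/4) * n * ε^2) := by
    have hfac1 : Real.exp (-t * (p + ε)) * (p * Real.exp t + (1 - p)) ≤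
        Real.exp (-(5/4) * ε^2) := by
      have h1 : Real.exp (-t * (p + ε)) = Real.exp (-(t*ε)) * Real.exp (-(t*p)) := by
        rw [← Real.exp_add]; ring_nf
      rw [h1, mul_assoc]
      calc Real.exp (-(t*ε)) * (Real.exp (-(t*p)) * (p * Real.exp t + (1 - p)))
          ≤ Real.exp (-(t*ε)) * Real.exp ((3/16) * t^2) :=
            mul_le_mul_of_nonneg_left (bern_mgf_bound hp0 hp1 ht0 ht1) (Real.exp_pos _).le
        _ = Real.exp (-(t*ε) + (3/16)*t^2) := by rw [← Real.exp_add]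
        _ ≤ Real.exp (-(5/4) * ε^2) := by
            rw [Real.exp_le_exp, ht_def]; nlinarith [sq_nonneg ε]
    have hbase0 : 0 ≤ Real.exp (-t * (p + ε)) * (p * Real.exp t + (1 - p)) := by
      have hpos : 0 ≤ p * Real.exp t + (1 - p) := by nlinarith [Real.exp_pos t]
      positivity
    calc Real.exp (-t * ((n:ℝ) * (p + ε))) * (p * Real.exp t + (1 - p))^n
        = (Real.exp (-t * (p + ε)) * (p * Real.exp t + (1 - p)))^n := by
          rw [mul_pow, ← Real.exp_nat_mul]; ring_nf
      _ ≤ (Real.exp (-(5/4) * ε^2))^n := pow_le_pow_left₀ hbase0 hfac1 n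
      _ = Real.exp (-(5/4) * n * ε^2) := by rw [← Real.exp_nat_mul]; ring_nf
  have hset : {ω | (n:ℝ) * (p + ε) ≤ ∑ i, (if X i ω ≤ 0 then (1:ℝ) else 0)} =
      {ω | (n:ℝ) * (p + ε) ≤ S ω} := by
    ext ω; simp [hSapp]
  rw [hset]
  have hfin : P {ω | (n:ℝ) * (p + ε) ≤ S ω} ≠ ⊤ := measure_ne_top _ _
  rw [← ENNReal.ofReal_toReal hfin]
  exact ENNReal.ofReal_le_ofReal (le_trans hch hfac)

lemma empCdf_nonneg (n : ℕ) (Y : Fin n → ℝ) (x : ℝ) : 0 ≤ empCdf n Y x := by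
  unfold empCdf
  apply mul_nonneg (by positivity)
  exact Finset.sum_nonneg fun i _ => by split <;> norm_num

lemma empCdf_le_one (n : ℕ) (Y : Fin n → ℝ) (x : ℝ) : empCdf n Y x ≤ 1 := by
  unfold empCdf
  rcases Nat.eq_zero_or_pos n with h | h
  · subst h; simp
  · have hs : (∑ i : Fin n, (if Y i ≤ x then (1:ℝ) else 0)) ≤ n := by
      calc (∑ i : Fin n, (if Y i ≤ x then (1:ℝ) else 0)) ≤ ∑ i : Fin n, (1:ℝ) :=
            Finset.sum_le_sum fun i _ => by split <;> norm_num
        _ = n := by simp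
    have hn' : (0:ℝ) < n := by exact_mod_cast h
    calc (n:ℝ)⁻¹ * ∑ i : Fin n, (if Y i ≤ x then (1:ℝ) else 0) ≤ (n:ℝ)⁻¹ * n :=
          mul_le_mul_of_nonneg_left hs (by positivity)
      _ = 1 := by field_simp

lemma bddAbove_ratio {n : ℕ} (hn : 0 < n) (Y : Fin n → ℝ) (F : ℝ → ℝ)
    (hFmono : Monotone F) (hFpos : ∀ x, 0 < F x) (hF1 : ∀ x, F x ≤ 1)
    (A b : ℝ) (hb : b < 1) :
    BddAbove ((fun x => Real.sqrt n * |empCdf n Y x - F x| / Real.sqrt (F x * (1 - F x))) ''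
      {x : ℝ | A ≤ F x ∧ F x ≤ b}) := by
  haveI : Nonempty (Fin n) := ⟨⟨0, hn⟩⟩
  set m0 : ℝ := Finset.univ.inf' Finset.univ_nonempty Y with hm0
  set q : ℝ := 1 - b with hq
  have hq0 : 0 < q := by rw [hq]; linarith
  have hρ : 0 < F m0 := hFpos m0
  refine ⟨Real.sqrt n * ((Real.sqrt (F m0 * q))⁻¹ + (Real.sqrt q)⁻¹), ?_⟩
  rintro v ⟨x, ⟨hxA, hxb⟩, rfl⟩
  show Real.sqrt n * |empCdf n Y x - F x| / Real.sqrt (F x * (1 - F x)) ≤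
    Real.sqrt n * ((Real.sqrt (F m0 * q))⁻¹ + (Real.sqrt q)⁻¹)
  have hFx := hFpos x
  have h1F : q ≤ 1 - F x := by rw [hq]; linarith
  by_cases hcase : m0 ≤ x
  · have hden : Real.sqrt (F m0 * q) ≤ Real.sqrt (F x * (1 - F x)) :=
      Real.sqrt_le_sqrt (by nlinarith [hFmono hcase])
    have hdenpos : 0 < Real.sqrt (F m0 * q) := Real.sqrt_pos.2 (by positivity)
    have hnum : |empCdf n Y x - F x| ≤ 1 := by
      rw [abs_le]
      constructor <;>
        nlinarith [empCdf_nonneg n Y x, empCdf_le_one n Y x, hF1 x, (hFpos x).le]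
    calc Real.sqrt n * |empCdf n Y x - F x| / Real.sqrt (F x * (1 - F x))
        ≤ Real.sqrt n * 1 / Real.sqrt (F m0 * q) :=
          div_le_div₀ (by positivity)
            (mul_le_mul_of_nonneg_left hnum (Real.sqrt_nonneg _)) hdenpos hden
      _ = Real.sqrt n * (Real.sqrt (F m0 * q))⁻¹ := by rw [mul_one, div_eq_mul_inv]
      _ ≤ Real.sqrt n * ((Real.sqrt (F m0 * q))⁻¹ + (Real.sqrt q)⁻¹) := by
          have hx2 : (0:ℝ) ≤ Real.sqrt n * (Real.sqrt q)⁻¹ := by positivity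
          nlinarith
  · push_neg at hcase
    have hemp : empCdf n Y x = 0 := by
      unfold empCdf
      rw [Finset.sum_eq_zero, mul_zero]
      intro i _
      rw [if_neg]
      push_neg
      exact lt_of_lt_of_le hcase (Finset.inf'_le _ (Finset.mem_univ i))
    rw [hemp, zero_sub, abs_neg, abs_of_nonneg (hFpos x).le]
    have hsqrtden : Real.sqrt (F x * (1 - F x)) = Real.sqrt (F x) * Real.sqrt (1 - F x) :=
      Real.sqrt_mul (hFpos x).le _
    have hs1 : Real.sqrt (F x) ≤ 1 := by
      rw [show (1:ℝ) = Real.sqrt 1 by simp]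
      exact Real.sqrt_le_sqrt (hF1 x)
    have hFx_le : F x ≤ Real.sqrt (F x) := by
      calc F x = Real.sqrt (F x) * Real.sqrt (F x) := (Real.mul_self_sqrt (hFpos x).le).symm
        _ ≤ Real.sqrt (F x) := by nlinarith [Real.sqrt_nonneg (F x)]
    have hden2 : Real.sqrt (F x) * Real.sqrt q ≤ Real.sqrt (F x * (1 - F x)) := by
      rw [hsqrtden]
      exact mul_le_mul_of_nonneg_left (Real.sqrt_le_sqrt h1F) (Real.sqrt_nonneg _)
    have hdpos : 0 < Real.sqrt (F x) * Real.sqrt q := by positivity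
    have hsFx : Real.sqrt (F x) ≠ 0 := by positivity
    calc Real.sqrt n * F x / Real.sqrt (F x * (1 - F x))
        ≤ Real.sqrt n * Real.sqrt (F x) / (Real.sqrt (F x) * Real.sqrt q) :=
          div_le_div₀ (by positivity)
            (mul_le_mul_of_nonneg_left hFx_le (Real.sqrt_nonneg _)) hdpos hden2
      _ = Real.sqrt n / Real.sqrt q := by
          rw [mul_comm (Real.sqrt (n:ℝ)) (Real.sqrt (F x)), mul_div_mul_left _ _ hsFx]
      _ = Real.sqrt n * (Real.sqrt q)⁻¹ := by rw [div_eq_mul_inv]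
      _ ≤ Real.sqrt n * ((Real.sqrt (F m0 * q))⁻¹ + (Real.sqrt q)⁻¹) := by
          have hx2 : (0:ℝ) ≤ Real.sqrt n * (Real.sqrt (F m0 * q))⁻¹ := by positivity
          nlinarith

/-- Lemma 3.3: the tail of `Yₙ` is almost bounded by that of
`Wₙ⁺⁺(c₀)`, uniformly over one-sided Gaussian mixtures. -/
theorem stmt9 (c0 : ℝ) (hc0 : 0 < c0) :
    ∀ δ > 0, ∃ N : ℕ, ∀ n ≥ N,
      ∀ H : Measure ℝ, IsProbabilityMeasure H → H (Set.Ici 0) = 1 →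
        ∀ (Ω : Type) [MeasurableSpace Ω] (P : Measure Ω), IsProbabilityMeasure P →
          ∀ X : Fin n → Ω → ℝ, IIDWithCdf P X (fun t => ∫ m, Phi (t - m) ∂H) →
            ∀ c : ℝ,
              P {ω | c ≤ Yn n (fun t => ∫ m, Phi (t - m) ∂H) (fun i => X i ω)} ≤
                P {ω | c ≤ WnPP c0 n (fun t => ∫ m, Phi (t - m) ∂H) (fun i => X i ω)} +
                  ENNReal.ofReal (2 * (1 + δ) * (n : ℝ) ^ (-c0)) := by
  intro δ hδ
  refine ⟨max 3 (Nat.ceil (64 * c0^2) + 1), ?_⟩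
  intro n hn H hHprob hH0 Ω _ P hPprob X hX c
  haveI := hHprob; haveI := hPprob
  obtain ⟨hXmeas, hXind, hXcdf⟩ := hX
  set F : ℝ → ℝ := fun t => ∫ m, Phi (t - m) ∂H with hF_def
  have hn3 : 3 ≤ n := le_trans (le_max_left _ _) hn
  have hnpos : 0 < n := by omega
  have hnR1 : (1:ℝ) ≤ n := by exact_mod_cast (by omega : 1 ≤ n)
  have hnRpos : (0:ℝ) < n := by linarith
  have hlogn : 0 ≤ Real.log n := Real.log_nonneg hnR1
  have hnceil : (64 * c0^2 : ℝ) ≤ n := by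
    have h1 : Nat.ceil (64 * c0^2) + 1 ≤ n := le_trans (le_max_right _ _) hn
    calc (64*c0^2:ℝ) ≤ (Nat.ceil (64*c0^2) : ℝ) := Nat.le_ceil _
      _ ≤ n := by exact_mod_cast (by omega : Nat.ceil (64*c0^2) ≤ n)
  set ε : ℝ := Real.sqrt (c0 * Real.log n / n) with hε_def
  have hε0 : 0 ≤ ε := Real.sqrt_nonneg _
  have harg0 : 0 ≤ c0 * Real.log n / n := by positivity
  have hε2 : ε^2 = c0 * Real.log n / n := Real.sq_sqrt harg0
  have hsqrtn_pos : 0 < Real.sqrt n := Real.sqrt_pos.2 hnRpos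
  have hsqrtn : 8 * c0 ≤ Real.sqrt n := by
    have h := Real.sqrt_le_sqrt (show (8*c0)^2 ≤ (n:ℝ) by nlinarith)
    rwa [Real.sqrt_sq (by positivity)] at h
  have hlog_le : Real.log n ≤ 2 * Real.sqrt n := by
    have h1 := Real.log_le_sub_one_of_pos hsqrtn_pos
    have h2 : Real.log (Real.sqrt n) = Real.log n / 2 := Real.log_sqrt (by positivity)
    rw [h2] at h1
    linarith
  have harg_le : c0 * Real.log n / n ≤ 1/4 := by
    have hnsq : (n:ℝ) = Real.sqrt n * Real.sqrt n := (Real.mul_self_sqrt (by positivity)).symm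
    rw [div_le_iff₀ hnRpos]
    nlinarith [mul_le_mul_of_nonneg_left hlog_le hc0.le]
  have hεhalf : ε ≤ 1/2 := by
    have hq : Real.sqrt (1/4 : ℝ) = 1/2 := by
      rw [show (1/4:ℝ) = (1/2)^2 by norm_num]
      exact Real.sqrt_sq (by norm_num)
    rw [hε_def, ← hq]
    exact Real.sqrt_le_sqrt harg_le
  -- cdf facts
  have hFmono : Monotone F := F_mono H
  have hFpos : ∀ x, 0 < F x := fun x => F_pos H x
  have hF1 : ∀ x, F x ≤ 1 := fun x => F_le_one H x
  have hp0 : 0 ≤ F 0 := (hFpos 0).le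
  have hp1 : F 0 ≤ 1 := hF1 0
  -- exceptional event
  set E : Set Ω := {ω | F 0 + ε < empCdf n (fun i => X i ω) 0} with hE_def
  -- inclusion
  have hincl : {ω | c ≤ Yn n F (fun i => X i ω)} ⊆
      {ω | c ≤ WnPP c0 n F (fun i => X i ω)} ∪ E := by
    intro ω hc
    by_cases hE : ω ∈ E
    · exact Or.inr hE
    · left
      have hnotE : empCdf n (fun i => X i ω) 0 ≤ F 0 + ε := not_lt.1 hE
      refine Set.mem_setOf_eq ▸ le_trans hc ?_
      unfold Yn WnPP
      have hsub : Set.Icc (0:ℝ) (Real.sqrt (2 * Real.log n)) ⊆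
          {x : ℝ | empCdf n (fun i => X i ω) 0 - Real.sqrt (c0 * Real.log n / n) ≤ F x ∧
            F x ≤ Phi (Real.sqrt (2 * Real.log n))} := by
        intro x hx
        obtain ⟨hx0, hxs⟩ := hx
        constructor
        · have h1 : empCdf n (fun i => X i ω) 0 - Real.sqrt (c0 * Real.log n / n) ≤ F 0 := by
            rw [← hε_def]; linarith
          exact le_trans h1 (hFmono hx0)
        · exact le_trans (F_le_Phi H hH0 x) (Phi_mono hxs)
      refine csSup_le_csSup ?_ ?_ (Set.image_mono hsub)
      · exact bddAbove_ratio hnpos (fun i => X i ω) F hFmono hFpos hF1 _ _ (Phi_lt_one _)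
      · exact ⟨_, Set.mem_image_of_mem _
          (Set.mem_Icc.2 ⟨le_refl (0:ℝ), Real.sqrt_nonneg _⟩)⟩
  -- probability of the exceptional event
  have hEsub : E ⊆ {ω | (n:ℝ) * (F 0 + ε) ≤ ∑ i, (if X i ω ≤ 0 then (1:ℝ) else 0)} := by
    intro ω hω
    have h1 : F 0 + ε < (n:ℝ)⁻¹ * ∑ i, (if X i ω ≤ 0 then (1:ℝ) else 0) := hω
    have h2 : (n:ℝ) * (F 0 + ε) < (n:ℝ) * ((n:ℝ)⁻¹ * ∑ i, (if X i ω ≤ 0 then (1:ℝ) else 0)) :=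
      mul_lt_mul_of_pos_left h1 hnRpos
    rw [← mul_assoc, mul_inv_cancel₀ (ne_of_gt hnRpos), one_mul] at h2
    exact h2.le
  have hPconc := conc_bound P X hXmeas hXind (F 0) hp0 hp1
    (fun i => hXcdf i 0) ε hε0 hεhalf
  have hPE : P E ≤ ENNReal.ofReal (2 * (1 + δ) * (n : ℝ) ^ (-c0)) := by
    refine le_trans (le_trans (measure_mono hEsub) hPconc) (ENNReal.ofReal_le_ofReal ?_)
    have hnε2 : (n:ℝ) * ε^2 = c0 * Real.log n := by
      rw [hε2]; field_simp
    have hrpow : (n:ℝ) ^ (-c0) = Real.exp (-c0 * Real.log n) := by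
      rw [Real.rpow_def_of_pos hnRpos]; ring_nf
    calc Real.exp (-(5/4) * n * ε^2) ≤ Real.exp (-c0 * Real.log n) := by
          rw [Real.exp_le_exp, mul_assoc, hnε2]
          nlinarith [mul_nonneg hc0.le hlogn]
      _ = (n:ℝ) ^ (-c0) := hrpow.symm
      _ ≤ 2 * (1 + δ) * (n:ℝ) ^ (-c0) := by
          have hr0 : (0:ℝ) ≤ (n:ℝ) ^ (-c0) := Real.rpow_nonneg hnRpos.le _
          nlinarith
  calc P {ω | c ≤ Yn n F (fun i => X i ω)} ≤
      P ({ω | c ≤ WnPP c0 n F (fun i => X i ω)} ∪ E) := measure_mono hincl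
    _ ≤ P {ω | c ≤ WnPP c0 n F (fun i => X i ω)} + P E := measure_union_le _ _
    _ ≤ P {ω | c ≤ WnPP c0 n F (fun i => X i ω)} +
        ENNReal.ofReal (2 * (1 + δ) * (n : ℝ) ^ (-c0)) := add_le_add le_rfl hPE


end
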